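/- arXiv:0910.0234 — 3 statements merged into one kernel-verified Lean document; each statement's English description precedes it below -/
import Mathlib

section
/- For any g = [[a,b],[c,d]] in SU(1,1) with |d| > |c|, the operator T_g maps H^∞(𝔻) into itself and its operator norm on H^∞(𝔻) equals 1/(|d|−|c|). -/
open Complex

/-- `g` belongs to `SU(1,1)`. -/
def IsSU11 (g : Matrix (Fin 2) (Fin 2) ℂ) : Prop :=
  g 1 0 = starRingEnd ℂ (g 0 1) ∧ g 1 1 = starRingEnd ℂ (g 0 0) ∧
    g 0 0 * g 1 1 - g 0 1 * g 1 0 = 1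

/-- The weighted composition operator `(T_g f)(z) = f(φ(z))/(cz+d)`. -/
noncomputable def Tg (g : Matrix (Fin 2) (Fin 2) ℂ) (f : ℂ → ℂ) (z : ℂ) : ℂ :=
  (g 1 0 * z + g 1 1)⁻¹ * f ((g 0 0 * z + g 0 1) / (g 1 0 * z + g 1 1))

/-- The set of values `|f(z)|` for `z` in the open unit disc. -/
def hinfSet (f : ℂ → ℂ) : Set ℝ := {y | ∃ z : ℂ, ‖z‖ < 1 ∧ y = ‖f z‖}

/-- Membership in `H^∞(𝔻)`: bounded analytic functions on the disc. -/
def MemHinf (f : ℂ → ℂ) : Prop :=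
  DifferentiableOn ℂ f (Metric.ball 0 1) ∧ BddAbove (hinfSet f)

/-- The sup norm on `H^∞(𝔻)`. -/
noncomputable def hinfNorm (f : ℂ → ℂ) : ℝ := sSup (hinfSet f)

private lemma normSq_id (a b z : ℂ) :
    normSq ((starRingEnd ℂ b) * z + (starRingEnd ℂ a)) - normSq (a*z+b)
      = (normSq a - normSq b) * (1 - normSq z) := by
  simp only [normSq_apply, add_re, add_im, mul_re, mul_im, conj_re, conj_im]
  ring

private lemma denom_lb (c d z : ℂ) (hz : ‖z‖ ≤ 1) :
    ‖d‖ - ‖c‖ ≤ ‖c*z+d‖ := by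
  have h1 : ‖d‖ ≤ ‖c*z+d‖ + ‖c*z‖ := by
    calc ‖d‖ = ‖(c*z+d) + -(c*z)‖ := by ring_nf
    _ ≤ _ := by simpa using norm_add_le (c*z+d) (-(c*z))
  have h2 : ‖c*z‖ ≤ ‖c‖ := by
    rw [norm_mul]
    calc ‖c‖ * ‖z‖ ≤ ‖c‖ * 1 := by
          have : ‖z‖ ≤ 1 := by simpa using hz
          exact mul_le_mul_of_nonneg_left this (norm_nonneg c)
    _ = _ := mul_one _
  linarith

private lemma mapsto_disc (a b z : ℂ) (hdet : normSq a - normSq b = 1) (hz : ‖z‖ < 1) :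
    ‖(a*z+b) / ((starRingEnd ℂ b) * z + (starRingEnd ℂ a))‖ < 1 := by
  have hz2 : normSq z < 1 := by
    have := Complex.sq_norm z
    nlinarith [norm_nonneg z, hz]
  have hid := normSq_id a b z
  rw [hdet, one_mul] at hid
  have hlt : normSq (a*z+b) < normSq ((starRingEnd ℂ b) * z + (starRingEnd ℂ a)) := by
    linarith
  have hden : 0 < normSq ((starRingEnd ℂ b) * z + (starRingEnd ℂ a)) :=
    lt_of_le_of_lt (normSq_nonneg _) hlt
  have habs : ‖a*z+b‖ < ‖(starRingEnd ℂ b) * z + (starRingEnd ℂ a)‖ := by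
    have := Complex.sq_norm (a*z+b)
    have := Complex.sq_norm ((starRingEnd ℂ b) * z + (starRingEnd ℂ a))
    nlinarith [norm_nonneg (a*z+b), norm_nonneg ((starRingEnd ℂ b) * z + (starRingEnd ℂ a))]
  rw [norm_div]
  exact (div_lt_one (norm_pos_iff.mpr (Complex.normSq_pos.mp hden))).mpr habs

/-- For `g = [[a,b],[c,d]] ∈ SU(1,1)` with `|d| > |c|`, `T_g` maps `H^∞(𝔻)` into itself
and its operator norm equals `1/(|d| - |c|)`. -/
theorem Tg_Hinf_norm (g : Matrix (Fin 2) (Fin 2) ℂ) (hg : IsSU11 g)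
    (hdc : ‖g 1 0‖ < ‖g 1 1‖) :
    (∀ f, MemHinf f → MemHinf (Tg g f)) ∧
    sSup {y | ∃ f, MemHinf f ∧ hinfNorm f ≤ 1 ∧ y = hinfNorm (Tg g f)}
      = (‖g 1 1‖ - ‖g 1 0‖)⁻¹ := by
  obtain ⟨hc, hd, hdetC⟩ := hg
  set a := g 0 0 with ha
  set b := g 0 1 with hb
  set A := ‖g 1 1‖ with hA
  set B := ‖g 1 0‖ with hB
  have hABpos : 0 < A - B := sub_pos.mpr hdc
  have hBnn : 0 ≤ B := norm_nonneg _
  have hApos : 0 < A := lt_of_le_of_lt hBnn hdc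
  -- determinant in real form
  have hdet : normSq a - normSq b = 1 := by
    have h1 : a * g 1 1 - b * g 1 0 = 1 := hdetC
    rw [hd, hc, Complex.mul_conj, Complex.mul_conj] at h1
    have : ((normSq a - normSq b : ℝ) : ℂ) = ((1:ℝ):ℂ) := by push_cast; simpa using h1
    exact_mod_cast this
  -- denominator lower bound on the disc
  have hlb : ∀ z : ℂ, ‖z‖ < 1 → A - B ≤ ‖g 1 0 * z + g 1 1‖ := fun z hz =>
    denom_lb (g 1 0) (g 1 1) z hz.le
  have hne : ∀ z : ℂ, ‖z‖ < 1 → g 1 0 * z + g 1 1 ≠ 0 := by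
    intro z hz h0
    have := hlb z hz
    rw [h0] at this
    simp at this
    linarith
  -- φ maps the disc into itself
  have hmaps : ∀ z : ℂ, ‖z‖ < 1 → ‖(a * z + b) / (g 1 0 * z + g 1 1)‖ < 1 := by
    intro z hz
    rw [hc, hd]
    exact mapsto_disc a b z hdet hz
  have hbd : ∀ f, MemHinf f → ∀ z : ℂ, ‖z‖ < 1 →
      ‖Tg g f z‖ ≤ (A - B)⁻¹ * hinfNorm f := by
    intro f hf z hz
    have hfz : ‖f ((a * z + b) / (g 1 0 * z + g 1 1))‖ ≤ hinfNorm f :=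
      le_csSup hf.2 ⟨_, hmaps z hz, rfl⟩
    have hM0 : 0 ≤ hinfNorm f :=
      le_trans (norm_nonneg (f 0)) (le_csSup hf.2 ⟨0, by simp, rfl⟩)
    have hinv : ‖(g 1 0 * z + g 1 1)⁻¹‖ ≤ (A - B)⁻¹ := by
      rw [norm_inv]
      exact inv_anti₀ hABpos (hlb z hz)
    calc ‖Tg g f z‖
        = ‖(g 1 0 * z + g 1 1)⁻¹‖ *
          ‖f ((a * z + b) / (g 1 0 * z + g 1 1))‖ := by
          rw [Tg, norm_mul]
      _ ≤ (A - B)⁻¹ * hinfNorm f :=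
          mul_le_mul hinv hfz (norm_nonneg _) (by positivity)
  -- part 1
  have part1 : ∀ f, MemHinf f → MemHinf (Tg g f) := by
    intro f hf
    have hM0 : 0 ≤ hinfNorm f :=
      le_trans (norm_nonneg (f 0)) (le_csSup hf.2 ⟨0, by simp, rfl⟩)
    constructor
    · -- differentiable
      have hdenD : DifferentiableOn ℂ (fun z : ℂ => g 1 0 * z + g 1 1) (Metric.ball 0 1) :=
        ((differentiable_id.const_mul (g 1 0)).add_const (g 1 1)).differentiableOn
      have hnumD : DifferentiableOn ℂ (fun z : ℂ => a * z + b) (Metric.ball 0 1) :=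
        ((differentiable_id.const_mul a).add_const b).differentiableOn
      have hne' : ∀ z ∈ Metric.ball (0:ℂ) 1, g 1 0 * z + g 1 1 ≠ 0 := fun z hz =>
        hne z (by simpa using mem_ball_zero_iff.mp hz)
      have hphiD : DifferentiableOn ℂ (fun z : ℂ => (a * z + b) / (g 1 0 * z + g 1 1))
          (Metric.ball 0 1) := hnumD.div hdenD hne'
      have hmapsTo : Set.MapsTo (fun z : ℂ => (a * z + b) / (g 1 0 * z + g 1 1))
          (Metric.ball 0 1) (Metric.ball 0 1) := by
        intro z hz
        rw [Metric.mem_ball, dist_zero_right]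
        exact hmaps z (by simpa using mem_ball_zero_iff.mp hz)
      have hcomp : DifferentiableOn ℂ
          (fun z : ℂ => f ((a * z + b) / (g 1 0 * z + g 1 1))) (Metric.ball 0 1) :=
        hf.1.comp hphiD hmapsTo
      have hinvD : DifferentiableOn ℂ (fun z : ℂ => (g 1 0 * z + g 1 1)⁻¹)
          (Metric.ball 0 1) := hdenD.inv hne'
      exact hinvD.mul hcomp
    · -- bounded
      refine ⟨(A - B)⁻¹ * hinfNorm f, ?_⟩
      rintro y ⟨z, hz, rfl⟩
      have hfz : ‖f ((a * z + b) / (g 1 0 * z + g 1 1))‖ ≤ hinfNorm f :=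
        le_csSup hf.2 ⟨_, hmaps z hz, rfl⟩
      have hinv : ‖(g 1 0 * z + g 1 1)⁻¹‖ ≤ (A - B)⁻¹ := by
        rw [norm_inv]
        exact inv_anti₀ hABpos (hlb z hz)
      calc ‖Tg g f z‖
          = ‖(g 1 0 * z + g 1 1)⁻¹‖ *
            ‖f ((a * z + b) / (g 1 0 * z + g 1 1))‖ := by
            rw [Tg, norm_mul]
        _ ≤ (A - B)⁻¹ * hinfNorm f := by
            exact mul_le_mul hinv hfz (norm_nonneg _) (by positivity)
  refine ⟨part1, ?_⟩
  -- the constant function 1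
  have hone : MemHinf (fun _ : ℂ => 1) := by
    refine ⟨differentiableOn_const 1, ⟨1, ?_⟩⟩
    rintro y ⟨z, hz, rfl⟩; simp
  have honele : hinfNorm (fun _ : ℂ => 1) ≤ 1 :=
    csSup_le ⟨1, ⟨0, by simp, by simp⟩⟩ (by rintro y ⟨z, hz, rfl⟩; simp)
  have hTone := part1 _ hone
  have hTone_val : ∀ z : ℂ, ‖Tg g (fun _ => 1) z‖
      = (‖g 1 0 * z + g 1 1‖)⁻¹ := by
    intro z; rw [Tg]; simp
  have hTone_ub : ∀ y ∈ hinfSet (Tg g (fun _ => 1)), y ≤ (A - B)⁻¹ := by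
    rintro y ⟨z, hz, rfl⟩
    rw [hTone_val z]
    exact inv_anti₀ hABpos (hlb z hz)
  -- per-f upper bound on hinfNorm (Tg g f)
  have hub : ∀ y ∈ {y | ∃ f, MemHinf f ∧ hinfNorm f ≤ 1 ∧ y = hinfNorm (Tg g f)},
      y ≤ (A - B)⁻¹ := by
    rintro y ⟨f, hf, hf1, rfl⟩
    refine csSup_le ⟨_, ⟨0, by simp, rfl⟩⟩ ?_
    rintro y' ⟨z, hz, rfl⟩
    calc ‖Tg g f z‖ ≤ (A - B)⁻¹ * hinfNorm f := hbd f hf z hz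
      _ ≤ (A - B)⁻¹ * 1 := by
          have : 0 ≤ (A - B)⁻¹ := by positivity
          exact mul_le_mul_of_nonneg_left hf1 this
      _ = (A - B)⁻¹ := mul_one _
  -- membership of (A - t B)⁻¹ in hinfSet (Tg g 1)
  have hmem : ∀ t : ℝ, 0 ≤ t → t < 1 → (A - t * B)⁻¹ ∈ hinfSet (Tg g (fun _ => 1)) := by
    intro t ht0 ht1
    by_cases hc0 : g 1 0 = 0
    · have hB0 : B = 0 := by rw [hB, hc0]; simp
      refine ⟨0, by simp, ?_⟩
      rw [hTone_val 0, hc0, hB0]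
      norm_num
      exact hA
    · have hBpos : 0 < B := norm_pos_iff.mpr hc0
      have hd0 : g 1 1 ≠ 0 := by
        intro h
        rw [hA, h] at hApos; simp at hApos
      set r : ℝ := t * B / A with hr
      have hr0 : 0 ≤ r := by positivity
      have hrB : t * B ≤ A := le_trans (by nlinarith) hdc.le
      have hr1 : r ≤ 1 := by rw [hr, div_le_one hApos]; exact hrB
      set w : ℂ := -(r : ℂ) * (g 1 1 / g 1 0) with hw
      have hwnorm : ‖w‖ = t := by
        rw [hw, norm_mul, norm_neg, Complex.norm_real, Real.norm_eq_abs, _root_.abs_of_nonneg hr0,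
          norm_div, ← hA, ← hB, hr]
        field_simp
      have hden : g 1 0 * w + g 1 1 = (1 - (r : ℂ)) * g 1 1 := by
        rw [hw]
        field_simp
        ring
      have habs_den : ‖g 1 0 * w + g 1 1‖ = A - t * B := by
        rw [hden, norm_mul]
        have h1 : (1 : ℂ) - (r : ℂ) = ((1 - r : ℝ) : ℂ) := by push_cast; ring
        rw [h1, Complex.norm_real, Real.norm_eq_abs, _root_.abs_of_nonneg (by linarith : (0:ℝ) ≤ 1 - r),
          ← hA, hr]
        field_simp
      exact ⟨w, by rw [hwnorm]; exact ht1, by rw [hTone_val w, habs_den]⟩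
  -- limit argument
  have hseq : ∀ n : ℕ, (A - (1 - ((n:ℝ)+1)⁻¹) * B)⁻¹ ≤ hinfNorm (Tg g (fun _ => 1)) := by
    intro n
    have hn0 : (0:ℝ) < (n:ℝ) + 1 := by positivity
    have hinvle : ((n:ℝ)+1)⁻¹ ≤ 1 := by
      rw [inv_le_one_iff₀]; right; linarith
    have h01 : (0:ℝ) ≤ 1 - ((n:ℝ)+1)⁻¹ := by linarith
    have h11 : 1 - ((n:ℝ)+1)⁻¹ < 1 := by
      have := inv_pos.mpr hn0; linarith
    exact le_csSup hTone.2 (hmem _ h01 h11)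
  have htend : Filter.Tendsto (fun n : ℕ => (A - (1 - ((n:ℝ)+1)⁻¹) * B)⁻¹)
      Filter.atTop (nhds ((A - B)⁻¹)) := by
    have h1 : Filter.Tendsto (fun n : ℕ => 1 - ((n:ℝ)+1)⁻¹) Filter.atTop (nhds 1) := by
      have h0 := tendsto_one_div_add_atTop_nhds_zero_nat (𝕜 := ℝ)
      have := Filter.Tendsto.const_sub (1:ℝ) h0
      simpa [one_div] using this
    have h2 : Filter.Tendsto (fun n : ℕ => A - (1 - ((n:ℝ)+1)⁻¹) * B)
        Filter.atTop (nhds (A - 1 * B)) :=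
      Filter.Tendsto.const_sub A (h1.mul_const B)
    have h3 := h2.inv₀ (by rw [one_mul]; exact ne_of_gt hABpos)
    simpa using h3
  have hge : (A - B)⁻¹ ≤ hinfNorm (Tg g (fun _ => 1)) :=
    le_of_tendsto htend (Filter.Eventually.of_forall hseq)
  have hT1 : hinfNorm (Tg g (fun _ => 1)) = (A - B)⁻¹ :=
    le_antisymm (csSup_le ⟨_, ⟨0, by simp, rfl⟩⟩ hTone_ub) hge
  refine le_antisymm ?_ ?_
  · exact csSup_le ⟨_, ⟨fun _ => 1, hone, honele, rfl⟩⟩ hub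
  · rw [← hT1]
    exact le_csSup ⟨(A - B)⁻¹, hub⟩ ⟨fun _ => 1, hone, honele, rfl⟩
end

section
/- Let Γ be a discrete Abelian group and (h_n)_{n≥0} a sequence in ℓ²(Γ) such that each convolution operator M_{h_n}: u ↦ h_n ⋆ u is bounded on ℓ²(Γ). If there exists M > 0 such that for every v ∈ ℓ²(Γ) with ‖v‖ = 1 one has Σ_{n≥0} ‖M_{h_n}* v‖ ≤ M, then for every input sequence (u_n) with sup_n ‖u_n‖_{ℓ²(Γ)} < ∞, the outputs y_n = Σ_{m=0}^n h_{n−m} ⋆ u_m satisfy sup_n ‖y_n‖_{ℓ²(Γ)} ≤ M · sup_n ‖u_n‖_{ℓ²(Γ)}. -/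
set_option maxHeartbeats 1000000

open MeasureTheory

/-- Sufficiency for BIBO stability: if the convolution operators `M_{h_n}` on `ℓ²(Γ)` satisfy
`Σ_n ‖M_{h_n}* v‖ ≤ M` for every unit vector `v`, then bounded inputs give outputs
`y_n = Σ_{m=0}^n h_{n-m} ⋆ u_m` with `sup_n ‖y_n‖ ≤ M · sup_n ‖u_n‖`. -/
theorem bibo_sufficient (Γ : Type*) [CommGroup Γ]
    (h : ℕ → lp (fun _ : Γ => ℂ) 2)
    (M : ℕ → lp (fun _ : Γ => ℂ) 2 →L[ℂ] lp (fun _ : Γ => ℂ) 2)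
    (hM : ∀ (n : ℕ) (u : lp (fun _ : Γ => ℂ) 2) (γ : Γ),
      (M n u) γ = ∑' φ : Γ, h n (γ * φ⁻¹) * u φ)
    (Mc : ℝ) (hMc : 0 < Mc)
    (hadj : ∀ v : lp (fun _ : Γ => ℂ) 2, ‖v‖ = 1 →
      ∀ N : ℕ, ∑ n ∈ Finset.range N, ‖ContinuousLinearMap.adjoint (M n) v‖ ≤ Mc)
    (u : ℕ → lp (fun _ : Γ => ℂ) 2)
    (hu : BddAbove (Set.range fun n => ‖u n‖)) :
    ∀ n : ℕ, ‖∑ m ∈ Finset.range (n + 1), M (n - m) (u m)‖ ≤ Mc * ⨆ m, ‖u m‖ := by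
  intro n
  set y := ∑ m ∈ Finset.range (n + 1), M (n - m) (u m) with hy
  set S := ⨆ m, ‖u m‖ with hSdef
  have hS : ∀ m, ‖u m‖ ≤ S := fun m => le_ciSup hu m
  have hS0 : 0 ≤ S := le_trans (norm_nonneg _) (hS 0)
  by_cases hy0 : y = 0
  · rw [hy0, norm_zero]; positivity
  · have hny : 0 < ‖y‖ := norm_pos_iff.mpr hy0
    set v := (‖y‖⁻¹ : ℂ) • y with hv
    have hv1 : ‖v‖ = 1 := by
      rw [hv, norm_smul]
      simp [abs_of_pos hny, inv_mul_cancel₀ hny.ne']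
    have key : (inner ℂ v y : ℂ) = (‖y‖ : ℂ) := by
      rw [hv, inner_smul_left, inner_self_eq_norm_sq_to_K]
      have hne : (‖y‖ : ℂ) ≠ 0 := by exact_mod_cast hny.ne'
      rw [map_inv₀, Complex.conj_ofReal]
      push_cast
      field_simp
      rfl
    calc ‖y‖ = ‖(inner ℂ v y : ℂ)‖ := by rw [key]; simp
      _ = ‖∑ m ∈ Finset.range (n+1), (inner ℂ ((ContinuousLinearMap.adjoint (M (n-m))) v) (u m) : ℂ)‖ := by
            rw [hy, inner_sum]
            congr 1
            exact Finset.sum_congr rfl fun m _ => (ContinuousLinearMap.adjoint_inner_left _ _ _).symm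
      _ ≤ ∑ m ∈ Finset.range (n+1), ‖(inner ℂ ((ContinuousLinearMap.adjoint (M (n-m))) v) (u m) : ℂ)‖ :=
            norm_sum_le _ _
      _ ≤ ∑ m ∈ Finset.range (n+1), ‖(ContinuousLinearMap.adjoint (M (n-m))) v‖ * ‖u m‖ :=
            Finset.sum_le_sum fun m _ => norm_inner_le_norm _ _
      _ ≤ ∑ m ∈ Finset.range (n+1), ‖(ContinuousLinearMap.adjoint (M (n-m))) v‖ * S :=
            Finset.sum_le_sum fun m _ => mul_le_mul_of_nonneg_left (hS m) (norm_nonneg _)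
      _ = (∑ m ∈ Finset.range (n+1), ‖(ContinuousLinearMap.adjoint (M (n-m))) v‖) * S := by
            rw [Finset.sum_mul]
      _ = (∑ k ∈ Finset.range (n+1), ‖(ContinuousLinearMap.adjoint (M k)) v‖) * S := by
            have hrefl := Finset.sum_range_reflect
              (fun k => ‖(ContinuousLinearMap.adjoint (M k)) v‖) (n+1)
            simp only [Nat.add_sub_cancel] at hrefl
            rw [hrefl]
      _ ≤ Mc * S := mul_le_mul_of_nonneg_right (hadj v hv1 (n+1)) hS0
end

section
/- Let Γ be a discrete Abelian group and (h_n)_{n≥0} a sequence in ℓ²(Γ) with each convolution operator M_{h_n} bounded on ℓ²(Γ). If the system y_n = Σ_{m=0}^n h_{n−m} ⋆ u_m is BIBO with constant M (i.e., sup_n ‖y_n‖ ≤ M sup_n ‖u_n‖ for all bounded input sequences), then for every unit vector v ∈ ℓ²(Γ), Σ_{n=0}^∞ ‖M_{h_n}* v‖ ≤ M. -/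
open MeasureTheory

/-- Necessity for BIBO stability: if the system `y_n = Σ_{m=0}^n h_{n-m} ⋆ u_m` on `ℓ²(Γ)`
is BIBO with constant `M` (bounded inputs give outputs bounded by `M` times the input
bound), then `Σ_n ‖M_{h_n}* v‖ ≤ M` for every unit vector `v`. -/
theorem bibo_necessary (Γ : Type*) [CommGroup Γ]
    (h : ℕ → lp (fun _ : Γ => ℂ) 2)
    (M : ℕ → lp (fun _ : Γ => ℂ) 2 →L[ℂ] lp (fun _ : Γ => ℂ) 2)
    (hM : ∀ (n : ℕ) (u : lp (fun _ : Γ => ℂ) 2) (γ : Γ),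
      (M n u) γ = ∑' φ : Γ, h n (γ * φ⁻¹) * u φ)
    (Mc : ℝ) (hMc : 0 < Mc)
    (hBIBO : ∀ (u : ℕ → lp (fun _ : Γ => ℂ) 2) (C : ℝ), (∀ n, ‖u n‖ ≤ C) →
      ∀ n : ℕ, ‖∑ m ∈ Finset.range (n + 1), M (n - m) (u m)‖ ≤ Mc * C) :
    ∀ v : lp (fun _ : Γ => ℂ) 2, ‖v‖ = 1 →
      ∀ N : ℕ, ∑ n ∈ Finset.range N, ‖ContinuousLinearMap.adjoint (M n) v‖ ≤ Mc := by
  classical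
  intro v hv N
  rcases Nat.eq_zero_or_pos N with hN | hN
  · subst hN; simpa using hMc.le
  obtain ⟨n, rfl⟩ : ∃ n, N = n + 1 := ⟨N - 1, (Nat.succ_pred_eq_of_pos hN).symm⟩
  set w : ℕ → lp (fun _ : Γ => ℂ) 2 :=
    fun k => ContinuousLinearMap.adjoint (M k) v with hw
  set u : ℕ → lp (fun _ : Γ => ℂ) 2 := fun m =>
    if _ : w (n - m) = 0 then 0 else (‖w (n - m)‖⁻¹ : ℂ) • w (n - m) with hu
  have hu1 : ∀ m, ‖u m‖ ≤ 1 := by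
    intro m
    by_cases h0 : w (n - m) = 0
    · simp [hu, h0]
    · simp only [hu, h0, dif_neg, not_false_iff, norm_smul, Complex.norm_real,
        norm_inv, norm_norm]
      rw [inv_mul_cancel₀ (norm_ne_zero_iff.mpr h0)]
  have hy := hBIBO u 1 hu1 n
  rw [mul_one] at hy
  set y := ∑ m ∈ Finset.range (n + 1), M (n - m) (u m) with hydef
  have hinner : (inner ℂ y v : ℂ) = ((∑ m ∈ Finset.range (n + 1), ‖w (n - m)‖ : ℝ) : ℂ) := by
    rw [hydef, sum_inner, Complex.ofReal_sum]
    refine Finset.sum_congr rfl fun m _ => ?_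
    rw [← ContinuousLinearMap.adjoint_inner_right]
    show (inner ℂ (u m) (w (n - m)) : ℂ) = _
    by_cases h0 : w (n - m) = 0
    · simp [hu, h0]
    · simp only [hu, h0, dif_neg, not_false_iff]
      have hne : (‖w (n - m)‖ : ℂ) ≠ 0 := by
        exact_mod_cast norm_ne_zero_iff.mpr h0
      rw [inner_smul_left, inner_self_eq_norm_sq_to_K, map_inv₀, Complex.conj_ofReal, sq]
      exact inv_mul_cancel_left₀ hne _
  have key : ∑ k ∈ Finset.range (n + 1), ‖w k‖ ≤ Mc := by
    have hre : ∑ m ∈ Finset.range (n + 1), ‖w (n - m)‖ = Complex.re (inner ℂ y v) := by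
      rw [hinner, Complex.ofReal_re]
    have hle : Complex.re (inner ℂ y v : ℂ) ≤ ‖y‖ * ‖v‖ :=
      (Complex.re_le_norm _).trans (norm_inner_le_norm y v)
    have hreflect : ∑ m ∈ Finset.range (n + 1), ‖w (n - m)‖
        = ∑ k ∈ Finset.range (n + 1), ‖w k‖ := by
      have := Finset.sum_range_reflect (fun k => ‖w k‖) (n + 1)
      simp only [Nat.add_sub_cancel] at this
      exact this
    calc ∑ k ∈ Finset.range (n + 1), ‖w k‖
        = Complex.re (inner ℂ y v : ℂ) := by rw [← hreflect, hre]
      _ ≤ ‖y‖ * ‖v‖ := hle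
      _ = ‖y‖ := by rw [hv, mul_one]
      _ ≤ Mc := hy
  exact key
end
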